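/- Let T : E → G be a positive linear operator with T(E) ⊆ E that is band preserving in the sense that |T(x)| ∧ |y| = 0 whenever x, y ∈ E satisfy |x| ∧ |y| = 0, and let S : G → G be a positive, order continuous linear operator with S(y) = T(y) for all y ∈ E. Then for all x, y ∈ G with |x| ∧ |y| = 0 one has |S(x)| ∧ |y| = 0. -/

import Mathlib

theorem stmt17
    {G : Type*} [Lattice G] [AddCommGroup G] [Module ℝ G]
    [CovariantClass G G (· + ·) (· ≤ ·)] [PosSMulMono ℝ G]
    (arch : ∀ x y : G, (∀ n : ℕ, n • x ≤ y) → x ≤ 0)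
    (E : Set G)
    (hE0 : (0 : G) ∈ E)
    (hEadd : ∀ x ∈ E, ∀ y ∈ E, x + y ∈ E)
    (hEsmul : ∀ (c : ℝ), ∀ x ∈ E, c • x ∈ E)
    (hEsup : ∀ x ∈ E, ∀ y ∈ E, x ⊔ y ∈ E)
    (hEinf : ∀ x ∈ E, ∀ y ∈ E, x ⊓ y ∈ E)
    (hdense : ∀ x : G, 0 < x → ∃ y ∈ E, 0 < y ∧ y ≤ x)
    (hmaj : ∀ x : G, ∃ y ∈ E, x ≤ y)
    (T : G → G)
    (hTE : ∀ x ∈ E, T x ∈ E)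
    (hT_add : ∀ x ∈ E, ∀ y ∈ E, T (x + y) = T x + T y)
    (hT_smul : ∀ (c : ℝ), ∀ x ∈ E, T (c • x) = c • T x)
    (hT_pos : ∀ x ∈ E, 0 ≤ x → 0 ≤ T x)
    (hT_band : ∀ x ∈ E, ∀ y ∈ E, |x| ⊓ |y| = 0 → |T x| ⊓ |y| = 0)
    (S : G →ₗ[ℝ] G)
    (hS_pos : ∀ x : G, 0 ≤ x → 0 ≤ S x)
    (hS_oc : ∀ D : Set G, D.Nonempty → DirectedOn (· ≥ ·) D → IsGLB D 0 →
      IsGLB (S '' D) 0)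
    (hS_ext : ∀ y ∈ E, S y = T y) :
    ∀ x y : G, |x| ⊓ |y| = 0 → |S x| ⊓ |y| = 0 := by
  -- S is monotone
  have hSmono : ∀ a b : G, a ≤ b → S a ≤ S b := by
    intro a b h
    have := hS_pos (b - a) (sub_nonneg.2 h)
    rw [map_sub] at this
    exact sub_nonneg.1 this
  -- inf subadditivity: a ⊓ (b + c) ≤ a ⊓ b + a ⊓ c for 0 ≤ b, c and a ⊓ b ≥ 0 context
  have hsub : ∀ a b c : G, 0 ≤ a → 0 ≤ b → 0 ≤ c →
      a ⊓ (b + c) ≤ a ⊓ b + a ⊓ c := by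
    intro a b c ha hb hc
    have h1 : a ⊓ (b + c) ≤ a ⊓ b + c := by
      have e : (a + c) ⊓ (b + c) = a ⊓ b + c := (inf_add a b c).symm
      have h := inf_le_inf_right (b + c) (le_add_of_nonneg_right hc : a ≤ a + c)
      rw [e] at h
      exact h
    have h0 : (0 : G) ≤ a ⊓ b := le_inf ha hb
    have h2 : a ⊓ (b + c) - a ⊓ b ≤ a ⊓ c := by
      refine le_inf ?_ ?_
      · rw [sub_le_iff_le_add]
        exact le_trans inf_le_left (le_add_of_nonneg_right h0)
      · exact sub_le_iff_le_add'.2 h1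
    calc a ⊓ (b + c) = a ⊓ b + (a ⊓ (b + c) - a ⊓ b) := by abel
      _ ≤ a ⊓ b + a ⊓ c := add_le_add_right h2 _
  -- key nonnegative case
  have key : ∀ x y : G, 0 ≤ x → 0 ≤ y → x ⊓ y = 0 → S x ⊓ y = 0 := by
    intro x y hx hy hxy
    set A : Set G := {u | u ∈ E ∧ 0 ≤ u ∧ u ≤ x} with hA
    set D : Set G := (fun u => x - u) '' A with hD
    have h0A : (0 : G) ∈ A := ⟨hE0, le_refl 0, hx⟩
    have hDne : D.Nonempty := ⟨x - 0, ⟨0, h0A, rfl⟩⟩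
    have hDdir : DirectedOn (· ≥ ·) D := by
      rintro _ ⟨u, hu, rfl⟩ _ ⟨v, hv, rfl⟩
      refine ⟨x - (u ⊔ v), ⟨u ⊔ v, ⟨hEsup u hu.1 v hv.1, le_trans hu.2.1 le_sup_left,
        sup_le hu.2.2 hv.2.2⟩, rfl⟩, ?_, ?_⟩
      · exact sub_le_sub_left le_sup_left _
      · exact sub_le_sub_left le_sup_right _
    have hDglb : IsGLB D 0 := by
      constructor
      · rintro _ ⟨u, hu, rfl⟩
        exact sub_nonneg.2 hu.2.2
      · intro b hb
        by_contra hb0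
        have hd : 0 < b ⊔ 0 :=
          lt_of_le_of_ne le_sup_right fun h => hb0 (le_trans le_sup_left h.symm.le)
        obtain ⟨w, hwE, hw0, hwd⟩ := hdense (b ⊔ 0) hd
        -- every u ∈ A satisfies u + w ∈ A
        have step : ∀ u ∈ A, u + w ∈ A := by
          intro u hu
          have hub : b ≤ x - u := hb ⟨u, hu, rfl⟩
          have h1 : u + (b ⊔ 0) ≤ x := by
            rw [add_sup, add_zero]
            refine sup_le ?_ hu.2.2
            rw [add_comm]
            exact add_le_of_le_sub_right hub
          exact ⟨hEadd u hu.1 w hwE, add_nonneg hu.2.1 hw0.le,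
            le_trans (add_le_add_right hwd u) h1⟩
        have hn : ∀ n : ℕ, n • w ∈ A := by
          intro n
          induction n with
          | zero => simpa using h0A
          | succ k ih => rw [succ_nsmul]; exact step _ ih
        have := arch w x (fun n => (hn n).2.2)
        exact absurd this hw0.not_ge
    have hSglb := hS_oc D hDne hDdir hDglb
    set c : G := S x ⊓ y with hc
    have hc0 : 0 ≤ c := le_inf (hS_pos x hx) hy
    -- c is a lower bound of S '' D
    have hlb : ∀ z ∈ S '' D, c ≤ z := by
      rintro _ ⟨_, ⟨u, hu, rfl⟩, rfl⟩
      have hTu0 : 0 ≤ T u := hT_pos u hu.1 hu.2.1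
      -- T u ⊓ y = 0
      have hTuy : T u ⊓ y = 0 := by
        by_contra h
        have hpos : 0 < T u ⊓ y := lt_of_le_of_ne (le_inf hTu0 hy) (Ne.symm h)
        obtain ⟨w, hwE, hw0, hwle⟩ := hdense _ hpos
        have hwu : |u| ⊓ |w| = 0 := by
          rw [abs_of_nonneg hu.2.1, abs_of_nonneg hw0.le]
          refine le_antisymm ?_ (le_inf hu.2.1 hw0.le)
          calc u ⊓ w ≤ x ⊓ y := inf_le_inf hu.2.2 (le_trans hwle inf_le_right)
            _ = 0 := hxy
        have := hT_band u hu.1 w hwE hwu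
        rw [abs_of_nonneg hTu0, abs_of_nonneg hw0.le] at this
        have hw' : w ≤ T u ⊓ w := le_inf (le_trans hwle inf_le_left) le_rfl
        rw [this] at hw'
        exact absurd hw' hw0.not_ge
      have hSu : S u = T u := hS_ext u hu.1
      have hcSu : c ⊓ S u = 0 := by
        rw [hSu]
        refine le_antisymm ?_ (le_inf hc0 hTu0)
        calc c ⊓ T u ≤ y ⊓ T u := inf_le_inf_right _ inf_le_right
          _ = 0 := by rw [inf_comm]; exact hTuy
      have hSxu : 0 ≤ S (x - u) := hS_pos _ (sub_nonneg.2 hu.2.2)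
      have hSu0 : 0 ≤ S u := hSu ▸ hTu0
      have hsplit : S x = S (x - u) + S u := by rw [map_sub]; abel
      calc c = c ⊓ S x := (inf_eq_left.2 inf_le_left).symm
        _ = c ⊓ (S (x - u) + S u) := by rw [hsplit]
        _ ≤ c ⊓ S (x - u) + c ⊓ S u := hsub c _ _ hc0 hSxu hSu0
        _ = c ⊓ S (x - u) := by rw [hcSu, add_zero]
        _ ≤ S (x - u) := inf_le_right
    have := hSglb.2 hlb
    exact le_antisymm this hc0
  -- reduce general case
  intro x y hxy
  have h1 : |S x| ≤ S |x| := by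
    have h := hSmono _ _ (neg_le_abs x)
    rw [map_neg] at h
    exact sup_le (hSmono _ _ (le_abs_self x)) h
  have h2 : S |x| ⊓ |y| = 0 := key |x| |y| (abs_nonneg x) (abs_nonneg y) hxy
  refine le_antisymm ?_ (le_inf (abs_nonneg _) (abs_nonneg _))
  calc |S x| ⊓ |y| ≤ S |x| ⊓ |y| := inf_le_inf_right _ h1
    _ = 0 := h2
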